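/- Let M be symmetric positive definite with Cholesky-type factorization M⁻¹ = M^{-T/2} M^{-1/2}, K symmetric positive semi-definite, and p, q, q' ∈ ℝᴺ with q' - q = k M⁻¹ p. If k² ≤ 4 / λ_max(M^{-1/2} K M^{-T/2}), then (1/2)pᵀM⁻¹p + (1/2)(q')ᵀKq + (1/2)ψ² ≥ 0 for any ψ ∈ ℝ, and in particular (1/2)pᵀ(M⁻¹ - (k²/4)M⁻¹KM⁻¹)p ≥ 0. -/

import Mathlib

open Matrix

private lemma dp_helper {N : ℕ} (P : Matrix (Fin N) (Fin N) ℝ) (x y : Fin N → ℝ) :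
    x ⬝ᵥ P *ᵥ y = (Pᵀ *ᵥ x) ⬝ᵥ y := by
  rw [dotProduct_mulVec]
  congr 1
  rw [← vecMul_transpose, transpose_transpose]

private lemma dp_self_pos {N : ℕ} {v : Fin N → ℝ} (hv : v ≠ 0) : 0 < v ⬝ᵥ v := by
  have h1 : 0 ≤ v ⬝ᵥ v := Finset.sum_nonneg fun i _ => mul_self_nonneg _
  have h2 : v ⬝ᵥ v ≠ 0 := fun h => hv (dotProduct_self_eq_zero.mp h)
  exact lt_of_le_of_ne h1 (Ne.symm h2)

/-- Conditional stability of the split-potential scheme: with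
`M⁻¹ = M^{-T/2} M^{-1/2}` (`Mih` denotes `M^{-1/2}`), `K` symmetric positive
semi-definite, `λmax` the largest eigenvalue of `M^{-1/2} K M^{-T/2}`, and
`q' - q = k M⁻¹ p`, the condition `k² ≤ 4/λmax` implies
`½ pᵀM⁻¹p + ½ (q')ᵀKq + ½ ψ² ≥ 0` for every `ψ`, and in particular
`½ pᵀ(M⁻¹ - (k²/4) M⁻¹KM⁻¹)p ≥ 0`. -/
theorem stmt_8 {N : ℕ} (k : ℝ) (hk : 0 < k)
    (M K Mih : Matrix (Fin N) (Fin N) ℝ) (hM : M.PosDef) (hK : K.PosSemidef)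
    (hMih : M⁻¹ = Mihᵀ * Mih)
    (lmax : ℝ)
    (hlmax_eig : ∃ v : Fin N → ℝ, v ≠ 0 ∧ (Mih * K * Mihᵀ).mulVec v = lmax • v)
    (hlmax_max : ∀ (μ : ℝ) (v : Fin N → ℝ), v ≠ 0 →
      (Mih * K * Mihᵀ).mulVec v = μ • v → μ ≤ lmax)
    (hstab : k ^ 2 ≤ 4 / lmax)
    (p q q' : Fin N → ℝ) (hq' : q' - q = k • M⁻¹.mulVec p) :
    (∀ ψ : ℝ,
      0 ≤ (1 / 2) * (p ⬝ᵥ M⁻¹.mulVec p) + (1 / 2) * (q' ⬝ᵥ K.mulVec q)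
          + (1 / 2) * ψ ^ 2) ∧
    0 ≤ (1 / 2) * (p ⬝ᵥ (M⁻¹ - (k ^ 2 / 4) • (M⁻¹ * K * M⁻¹)).mulVec p) := by
  classical
  have hMihH : Mihᵀ = Mihᴴ := (conjTranspose_eq_transpose_of_trivial Mih).symm
  set A := Mih * K * Mihᵀ with hA_def
  have hApsd : A.PosSemidef := by
    rw [hA_def, hMihH]
    exact hK.mul_mul_conjTranspose_same Mih
  have hAherm : A.IsHermitian := hApsd.1
  -- quadratic form bound: wᵀ A w ≤ lmax * wᵀ w
  have key : ∀ w : Fin N → ℝ, w ⬝ᵥ A *ᵥ w ≤ lmax * (w ⬝ᵥ w) := by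
    intro w
    set B : Matrix (Fin N) (Fin N) ℝ := lmax • (1 : Matrix (Fin N) (Fin N) ℝ) - A with hB_def
    have hAT : Aᵀ = A := by
      rw [← conjTranspose_eq_transpose_of_trivial]; exact hAherm.eq
    have hBherm : B.IsHermitian := by
      simp [Matrix.IsHermitian, hB_def, conjTranspose_sub, conjTranspose_smul,
        conjTranspose_one, hAherm.eq, hAT]
    have hBpsd : B.PosSemidef := by
      refine hBherm.posSemidef_iff_eigenvalues_nonneg.mpr fun i => show (0 : ℝ) ≤ hBherm.eigenvalues i from ?_
      set v : Fin N → ℝ := (WithLp.equiv 2 _) (hBherm.eigenvectorBasis i) with hv_def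
      have hvne : v ≠ 0 := by
        intro h
        exact hBherm.eigenvectorBasis.orthonormal.ne_zero i
          ((WithLp.equiv 2 _).injective (by rw [← hv_def, h]; simp))
      have hEig : B *ᵥ v = hBherm.eigenvalues i • v := hBherm.mulVec_eigenvectorBasis i
      have hAv : A *ᵥ v = (lmax - hBherm.eigenvalues i) • v := by
        have hBv : B *ᵥ v = lmax • v - A *ᵥ v := by
          rw [hB_def, sub_mulVec, smul_mulVec, one_mulVec]
        rw [hBv, sub_eq_iff_eq_add] at hEig
        rw [sub_smul, eq_sub_iff_add_eq, add_comm]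
        exact hEig.symm
      have := hlmax_max (lmax - hBherm.eigenvalues i) _ hvne hAv
      linarith
    have h0 := hBpsd.dotProduct_mulVec_nonneg w
    have hsw : star w = w := by simp
    rw [hsw, hB_def, sub_mulVec, smul_mulVec, one_mulVec, dotProduct_sub,
      dotProduct_smul] at h0
    simpa [smul_eq_mul] using sub_nonneg.mp h0
  -- lmax > 0 and k² lmax ≤ 4
  have hlmax_pos : 0 < lmax := by
    obtain ⟨v, hvne, hv⟩ := hlmax_eig
    have h1 := hApsd.dotProduct_mulVec_nonneg v
    have hsv : star v = v := by simp
    rw [hsv, hv, dotProduct_smul, smul_eq_mul] at h1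
    have hvv : 0 < v ⬝ᵥ v := dp_self_pos hvne
    have hnn : 0 ≤ lmax := by
      by_contra hneg
      push_neg at hneg
      exact absurd h1 (not_le.mpr (mul_neg_of_neg_of_pos hneg hvv))
    rcases lt_or_eq_of_le hnn with h | h
    · exact h
    · exfalso
      rw [← h] at hstab
      simp at hstab
      nlinarith
  have hk2l : k ^ 2 * lmax ≤ 4 := by
    rw [le_div_iff₀ hlmax_pos] at hstab
    linarith
  -- the square root of K
  open scoped MatrixOrder in
  set R := CFC.sqrt K with hR_def
  open scoped MatrixOrder in
  have hRR : R * R = K := CFC.sqrt_mul_sqrt_self K hK.nonneg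
  open scoped MatrixOrder in
  have hRsymm : Rᵀ = R := by
    rw [← conjTranspose_eq_transpose_of_trivial]
    exact (CFC.sqrt_nonneg K).posSemidef.1
  -- vectors
  set w : Fin N → ℝ := Mih *ᵥ p with hw_def
  set a : Fin N → ℝ := R *ᵥ q' with ha_def
  set b : Fin N → ℝ := R *ᵥ (M⁻¹ *ᵥ p) with hb_def
  have hMiv : M⁻¹ *ᵥ p = Mihᵀ *ᵥ w := by
    rw [hMih, hw_def, mulVec_mulVec]
  have hMiT : M⁻¹ᵀ = M⁻¹ := by
    rw [hMih, transpose_mul, transpose_transpose]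
  -- identity: x ⬝ᵥ K y = (R x) ⬝ᵥ (R y)
  have idK : ∀ x y : Fin N → ℝ, x ⬝ᵥ K *ᵥ y = (R *ᵥ x) ⬝ᵥ (R *ᵥ y) := by
    intro x y
    rw [← hRR, ← mulVec_mulVec, dp_helper, hRsymm]
  -- identity: p ⬝ᵥ M⁻¹ p = w ⬝ᵥ w
  have id1 : p ⬝ᵥ M⁻¹ *ᵥ p = w ⬝ᵥ w := by
    rw [hMih, ← mulVec_mulVec, dp_helper, transpose_transpose, hw_def]
  -- identity: b ⬝ᵥ b = w ⬝ᵥ A w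
  have id3 : b ⬝ᵥ b = w ⬝ᵥ A *ᵥ w := by
    rw [hb_def, ← idK, hMiv, hA_def, ← mulVec_mulVec, ← mulVec_mulVec,
      dp_helper Mih, idK]
  -- q = q' - k • M⁻¹ p
  have hq : q = q' - k • (M⁻¹ *ᵥ p) := by
    rw [sub_eq_iff_eq_add] at hq'
    rw [hq']; abel
  -- identity: q' ⬝ᵥ K q = a⬝a - k (a⬝b)
  have id4 : q' ⬝ᵥ K *ᵥ q = a ⬝ᵥ a - k * (a ⬝ᵥ b) := by
    rw [hq, mulVec_sub, mulVec_smul, dotProduct_sub, dotProduct_smul, smul_eq_mul,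
      idK, idK, ← ha_def, ← hb_def]
  -- identity: p ⬝ᵥ (M⁻¹KM⁻¹) p = b ⬝ᵥ b
  have id5 : p ⬝ᵥ (M⁻¹ * K * M⁻¹) *ᵥ p = b ⬝ᵥ b := by
    rw [← mulVec_mulVec, ← mulVec_mulVec, dp_helper, hMiT, idK, hb_def]
  clear_value R w a b
  -- the key bounds
  have hbb : b ⬝ᵥ b ≤ lmax * (w ⬝ᵥ w) := id3 ▸ key w
  have haa : 0 ≤ a ⬝ᵥ a := Finset.sum_nonneg fun i _ => mul_self_nonneg _
  have hww : 0 ≤ w ⬝ᵥ w := Finset.sum_nonneg fun i _ => mul_self_nonneg _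
  have hbb0 : 0 ≤ b ⬝ᵥ b := Finset.sum_nonneg fun i _ => mul_self_nonneg _
  have hCS : (a ⬝ᵥ b) ^ 2 ≤ (a ⬝ᵥ a) * (b ⬝ᵥ b) := by
    simpa [dotProduct, pow_two] using
      Finset.sum_mul_sq_le_sq_mul_sq Finset.univ a b
  have hcross : k * (a ⬝ᵥ b) ≤ a ⬝ᵥ a + w ⬝ᵥ w := by
    have h1 : (k * (a ⬝ᵥ b)) ^ 2 ≤ k ^ 2 * ((a ⬝ᵥ a) * (b ⬝ᵥ b)) := by
      nlinarith [hCS, sq_nonneg k]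
    have h2 : k ^ 2 * ((a ⬝ᵥ a) * (b ⬝ᵥ b)) ≤ k ^ 2 * ((a ⬝ᵥ a) * (lmax * (w ⬝ᵥ w))) :=
      mul_le_mul_of_nonneg_left (mul_le_mul_of_nonneg_left hbb haa) (sq_nonneg k)
    have h3 : k ^ 2 * ((a ⬝ᵥ a) * (lmax * (w ⬝ᵥ w)))
        = (k ^ 2 * lmax) * ((a ⬝ᵥ a) * (w ⬝ᵥ w)) := by ring
    have h4 : (k ^ 2 * lmax) * ((a ⬝ᵥ a) * (w ⬝ᵥ w)) ≤ 4 * ((a ⬝ᵥ a) * (w ⬝ᵥ w)) :=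
      mul_le_mul_of_nonneg_right hk2l (mul_nonneg haa hww)
    have h5 : (k * (a ⬝ᵥ b)) ^ 2 ≤ (a ⬝ᵥ a + w ⬝ᵥ w) ^ 2 := by
      nlinarith [sq_nonneg (a ⬝ᵥ a - w ⬝ᵥ w)]
    nlinarith [sq_nonneg (a ⬝ᵥ a + w ⬝ᵥ w - k * (a ⬝ᵥ b)),
      sq_nonneg (a ⬝ᵥ a + w ⬝ᵥ w + k * (a ⬝ᵥ b))]
  constructor
  · intro ψ
    rw [id1, id4]
    have hψ : 0 ≤ ψ ^ 2 := sq_nonneg ψ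
    linarith
  · have expand : p ⬝ᵥ (M⁻¹ - (k ^ 2 / 4) • (M⁻¹ * K * M⁻¹)) *ᵥ p
        = w ⬝ᵥ w - (k ^ 2 / 4) * (b ⬝ᵥ b) := by
      rw [sub_mulVec, dotProduct_sub, id1, smul_mulVec, dotProduct_smul,
        smul_eq_mul, id5]
    rw [expand]
    have h1 : (k ^ 2 / 4) * (b ⬝ᵥ b) ≤ (k ^ 2 / 4) * (lmax * (w ⬝ᵥ w)) :=
      mul_le_mul_of_nonneg_left hbb (by positivity)
    have h2 : (k ^ 2 * lmax) * (w ⬝ᵥ w) ≤ 4 * (w ⬝ᵥ w) :=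
      mul_le_mul_of_nonneg_right hk2l hww
    nlinarith [h1, h2]
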